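/- arXiv:2512.08159 — 2 statements merged into one kernel-verified Lean document; each statement's English description precedes it below -/
import Mathlib

section
/- For a continuous map f : X → ℝ and an open set U ⊆ ℝ, the image of f⁻¹(U) under the Reeb quotient map q_f equals f̃⁻¹(U), and the restriction of q_f to f⁻¹(U) is a quotient map onto this set; moreover the Reeb equivalence relation of f restricted to f⁻¹(U) agrees with the Reeb equivalence relation of f|_{f⁻¹(U)}. -/
open Set

variable {X Y : Type*} [TopologicalSpace X] [TopologicalSpace Y]

/-- The Reeb relation of `f : X → ℝ`: `x ∼_f y` iff `y` lies in the connected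
component of `x` inside the level set `f ⁻¹' {f x}`. -/
def ReebRel (f : X → ℝ) (x y : X) : Prop :=
  y ∈ connectedComponentIn (f ⁻¹' {f x}) x

/-- For `L ⊆ S`, the connected component of `x` in `val ⁻¹' L` inside the subspace `S`
maps onto the connected component of `x.1` in `L`. -/
lemma image_connectedComponentIn_val {S L : Set X} (hLS : L ⊆ S) (x : S) (hx : x.1 ∈ L) :
    Subtype.val '' connectedComponentIn (Subtype.val ⁻¹' L : Set S) x
      = connectedComponentIn L x.1 := by
  apply subset_antisymm
  · have := continuous_subtype_val.image_connectedComponentIn_subset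
      (s := (Subtype.val ⁻¹' L : Set S)) (a := x) hx
    rwa [Set.image_preimage_eq_of_subset (by simpa using hLS)] at this
  · set C := connectedComponentIn L x.1 with hC
    have hCL : C ⊆ L := connectedComponentIn_subset L x.1
    have hCS : C ⊆ range (Subtype.val : S → X) := by simpa using hCL.trans hLS
    have himg : Subtype.val '' (Subtype.val ⁻¹' C : Set S) = C :=
      Set.image_preimage_eq_of_subset hCS
    have hpre : IsPreconnected (Subtype.val ⁻¹' C : Set S) := by
      have := Topology.IsInducing.subtypeVal (t := S)
      rw [← this.isPreconnected_image, himg]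
      exact isPreconnected_connectedComponentIn
    have hsub : (Subtype.val ⁻¹' C : Set S) ⊆ connectedComponentIn (Subtype.val ⁻¹' L) x :=
      hpre.subset_connectedComponentIn (mem_connectedComponentIn hx)
        (preimage_mono hCL)
    calc C = Subtype.val '' (Subtype.val ⁻¹' C : Set S) := himg.symm
    _ ⊆ _ := image_mono hsub

theorem stmt4 (f : X → ℝ) (hf : Continuous f)
    (ft : Quot (ReebRel f) → ℝ) (hft : ft ∘ Quot.mk (ReebRel f) = f)
    (U : Set ℝ) (hU : IsOpen U) :
    Quot.mk (ReebRel f) '' (f ⁻¹' U) = ft ⁻¹' U ∧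
    Topology.IsQuotientMap ((ft ⁻¹' U).restrictPreimage (Quot.mk (ReebRel f))) ∧
    ∀ x y : f ⁻¹' U,
      ReebRel (fun z : f ⁻¹' U => f z.1) x y ↔ ReebRel f x.1 y.1 := by
  have hpre : f ⁻¹' U = Quot.mk (ReebRel f) ⁻¹' (ft ⁻¹' U) := by
    ext z
    simp only [mem_preimage]
    rw [show f z = ft (Quot.mk (ReebRel f) z) from (congrFun hft z).symm]
  have hqm : Topology.IsQuotientMap (Quot.mk (ReebRel f)) := isQuotientMap_quot_mk
  have hftc : Continuous ft := hqm.continuous_iff.mpr (by rw [hft]; exact hf)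
  refine ⟨?_, ?_, ?_⟩
  · rw [hpre, Set.image_preimage_eq _ hqm.surjective]
  · exact hqm.restrictPreimage_isOpen (hftc.isOpen_preimage U hU)
  · intro x y
    have hxL : x.1 ∈ f ⁻¹' {f x.1} := rfl
    have hLS : f ⁻¹' {f x.1} ⊆ f ⁻¹' U := fun z hz => by
      simp only [mem_preimage, mem_singleton_iff] at hz
      simp only [mem_preimage]; rw [hz]; exact x.2
    have key := image_connectedComponentIn_val hLS x hxL
    have heq : ((fun z : f ⁻¹' U => f z.1) ⁻¹' {f x.1} : Set (f ⁻¹' U))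
        = Subtype.val ⁻¹' (f ⁻¹' {f x.1}) := rfl
    constructor
    · intro h
      unfold ReebRel at h ⊢
      rw [heq] at h
      rw [← key]
      exact ⟨y, h, rfl⟩
    · intro h
      unfold ReebRel at h ⊢
      rw [heq]
      rw [← key] at h
      obtain ⟨z, hz, hzy⟩ := h
      rwa [show z = y from Subtype.ext hzy] at hz
end

section
/- If K is a closed connected subset of the Reeb graph X/∼_f, then the preimage q_f⁻¹(K) is connected in X. -/
open Set Topology

variable {X Y : Type*} [TopologicalSpace X] [TopologicalSpace Y]

lemma reebRel_equivalence (f : X → ℝ) : Equivalence (ReebRel f) := by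
  constructor
  · intro x
    exact mem_connectedComponentIn rfl
  · intro x y h
    have hy : f y = f x := (connectedComponentIn_subset (f ⁻¹' {f x}) x) h
    have := connectedComponentIn_eq h
    unfold ReebRel
    rw [hy, ← this]
    exact mem_connectedComponentIn rfl
  · intro x y z hxy hyz
    have hy : f y = f x := (connectedComponentIn_subset (f ⁻¹' {f x}) x) hxy
    have := connectedComponentIn_eq hxy
    unfold ReebRel at hyz ⊢
    rw [hy, ← this] at hyz
    exact hyz

lemma reeb_fiber_eq (f : X → ℝ) (x : X) :
    Quot.mk (ReebRel f) ⁻¹' {Quot.mk (ReebRel f) x} = connectedComponentIn (f ⁻¹' {f x}) x := by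
  ext y
  simp only [mem_preimage, mem_singleton_iff, Quot.eq]
  rw [Equivalence.eqvGen_iff (reebRel_equivalence f)]
  exact ⟨fun h => (reebRel_equivalence f).symm h, fun h => (reebRel_equivalence f).symm h⟩

theorem stmt6 (f : X → ℝ) (hf : Continuous f)
    (K : Set (Quot (ReebRel f))) (hKcl : IsClosed K) (hKconn : IsConnected K) :
    IsConnected (Quot.mk (ReebRel f) ⁻¹' K) := by
  set q : X → Quot (ReebRel f) := Quot.mk (ReebRel f) with hq
  set S : Set X := q ⁻¹' K with hS
  have hqm : Topology.IsQuotientMap q := isQuotientMap_quot_mk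
  have hqc : Continuous q := hqm.continuous
  -- nonempty
  obtain ⟨k, hk⟩ := hKconn.nonempty
  obtain ⟨x0, rfl⟩ := Quot.exists_rep k
  refine ⟨⟨x0, hk⟩, ?_⟩
  -- fiber facts
  have fiber_sub : ∀ x ∈ S, q ⁻¹' {q x} ⊆ S := by
    intro x hx y hy
    simp only [mem_preimage, mem_singleton_iff] at hy
    simpa [hS, mem_preimage, hy] using hx
  have fiber_conn : ∀ x : X, IsPreconnected (q ⁻¹' {q x}) := by
    intro x
    rw [hq, reeb_fiber_eq]
    exact isPreconnected_connectedComponentIn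
  intro u v hu hv hSuv ⟨a, haS, hau⟩ ⟨b, hbS, hbv⟩
  by_contra hcon
  rw [Set.not_nonempty_iff_eq_empty] at hcon
  have hdisj : ∀ x, x ∈ S → x ∈ u → x ∈ v → False := by
    intro x h1 h2 h3
    have : x ∈ S ∩ (u ∩ v) := ⟨h1, h2, h3⟩
    rw [hcon] at this; exact this
  -- dichotomy for fibers
  have dich : ∀ x ∈ S, q ⁻¹' {q x} ⊆ u ∨ q ⁻¹' {q x} ⊆ v := by
    intro x hx
    by_contra h
    push_neg at h
    obtain ⟨y, hy, hyu⟩ := not_subset.mp h.1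
    obtain ⟨z, hz, hzv⟩ := not_subset.mp h.2
    have hsub := fiber_sub x hx
    have hy' : y ∈ v := (hSuv (hsub hy)).resolve_left hyu
    have hz' : z ∈ u := (hSuv (hsub hz)).resolve_right hzv
    obtain ⟨w, hw⟩ := fiber_conn x u v hu hv (fun t ht => hSuv (hsub ht))
      ⟨z, hz, hz'⟩ ⟨y, hy, hy'⟩
    exact hdisj w (hsub hw.1) hw.2.1 hw.2.2
  -- the two closed saturated pieces
  set C1 : Set X := S ∩ uᶜ with hC1
  set C2 : Set X := S ∩ vᶜ with hC2
  have hScl : IsClosed S := hKcl.preimage hqc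
  have hC1cl : IsClosed C1 := hScl.inter hu.isClosed_compl
  have hC2cl : IsClosed C2 := hScl.inter hv.isClosed_compl
  have sat1 : q ⁻¹' (q '' C1) = C1 := by
    apply Subset.antisymm
    · rintro y ⟨x, ⟨hxS, hxu⟩, hxy⟩
      have hfib : q ⁻¹' {q x} ⊆ v := by
        rcases dich x hxS with h | h
        · exact absurd (h (by simp)) hxu
        · exact h
      have hyf : y ∈ q ⁻¹' {q x} := by simp [hxy]
      have hyS : y ∈ S := fiber_sub x hxS hyf
      refine ⟨hyS, fun hyu => hdisj y hyS hyu (hfib hyf)⟩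
    · exact subset_preimage_image q C1
  have sat2 : q ⁻¹' (q '' C2) = C2 := by
    apply Subset.antisymm
    · rintro y ⟨x, ⟨hxS, hxv⟩, hxy⟩
      have hfib : q ⁻¹' {q x} ⊆ u := by
        rcases dich x hxS with h | h
        · exact h
        · exact absurd (h (by simp)) hxv
      have hyf : y ∈ q ⁻¹' {q x} := by simp [hxy]
      have hyS : y ∈ S := fiber_sub x hxS hyf
      refine ⟨hyS, fun hyv => hdisj y hyS (hfib hyf) hyv⟩
    · exact subset_preimage_image q C2
  have hT1cl : IsClosed (q '' C1) := by rw [← hqm.isClosed_preimage, sat1]; exact hC1cl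
  have hT2cl : IsClosed (q '' C2) := by rw [← hqm.isClosed_preimage, sat2]; exact hC2cl
  have hcover : K ⊆ q '' C1 ∪ q '' C2 := by
    intro k hkK
    obtain ⟨x, rfl⟩ := Quot.exists_rep k
    have hxS : x ∈ S := hkK
    rcases hSuv hxS with hxu | hxv
    · exact Or.inr ⟨x, ⟨hxS, fun hxv => hdisj x hxS hxu hxv⟩, rfl⟩
    · exact Or.inl ⟨x, ⟨hxS, fun hxu => hdisj x hxS hxu hxv⟩, rfl⟩
  have hne1 : (K ∩ q '' C1).Nonempty :=
    ⟨q b, hbS, ⟨b, ⟨hbS, fun hbu => hdisj b hbS hbu hbv⟩, rfl⟩⟩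
  have hne2 : (K ∩ q '' C2).Nonempty :=
    ⟨q a, haS, ⟨a, ⟨haS, fun hav => hdisj a haS hau hav⟩, rfl⟩⟩
  obtain ⟨k, hkK, hk1, hk2⟩ := isPreconnected_closed_iff.mp hKconn.isPreconnected
    (q '' C1) (q '' C2) hT1cl hT2cl hcover hne1 hne2
  obtain ⟨x2, hx2, hx2q⟩ := hk2
  have : x2 ∈ C1 := by
    rw [← sat1]
    obtain ⟨x1, hx1, hx1q⟩ := hk1
    exact ⟨x1, hx1, by rw [hx1q, hx2q]⟩
  rcases hSuv hx2.1 with h | h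
  · exact this.2 h
  · exact hx2.2 h
end
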